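/- Let p be a prime, p ∤ c, c an integer > 1, and n ≥ 0. Then Σ_{ρ^p = 1} Σ_{ξ^c = 1, ξ ≠ 1} 𝔅_n(ρξ) = p^{n+1} (1 - c^{n+1}) B_{n+1}/(n+1), where the outer sum runs over all p-th roots of unity ρ (including 1) and the inner over nontrivial c-th roots of unity. -/

import Mathlib

open Polynomial

/-- The twisted Bernoulli numbers `𝔅_n(ξ)` (for `ξ ≠ 1`), defined by the expansion
`1/(1 - ξ e^t) = Σ_{n≥0} 𝔅_n(ξ) t^n/n!`. -/
noncomputable def twistedBernoulli (ξ : ℂ) (n : ℕ) : ℂ :=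
  (n.factorial : ℂ) * PowerSeries.coeff (R := ℂ) n (1 - PowerSeries.C (R := ℂ) ξ * PowerSeries.exp ℂ)⁻¹

section Aux
open Finset PowerSeries

lemma prodXsub (N : ℕ) (hN : 0 < N) :
    ∏ ω ∈ nthRootsFinset N (1 : ℂ), (Polynomial.X - Polynomial.C ω) = Polynomial.X ^ N - 1 :=
  (X_pow_sub_one_eq_prod hN (Complex.isPrimitiveRoot_exp N hN.ne')).symm

lemma cardS (N : ℕ) (hN : 0 < N) : #(nthRootsFinset N (1 : ℂ)) = N :=
  (Complex.isPrimitiveRoot_exp N hN.ne').card_nthRootsFinset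

lemma prodErase1 (N : ℕ) (hN : 0 < N) :
    ∏ ω ∈ (nthRootsFinset N (1 : ℂ)).erase 1, (Polynomial.X - Polynomial.C ω) =
      ∑ k ∈ range N, Polynomial.X ^ k := by
  have h1 : (1 : ℂ) ∈ nthRootsFinset N (1 : ℂ) := one_mem_nthRootsFinset hN
  have hXne : (Polynomial.X - Polynomial.C (1:ℂ)) ≠ 0 := X_sub_C_ne_zero 1
  apply mul_left_cancel₀ hXne
  rw [Finset.mul_prod_erase (nthRootsFinset N (1 : ℂ)) (fun ω => Polynomial.X - Polynomial.C ω) h1,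
    prodXsub N hN, ← geom_sum_mul]
  rw [mul_comm]
  norm_num

lemma prodOneSub (N : ℕ) (hN : 0 < N) :
    ∏ ω ∈ (nthRootsFinset N (1 : ℂ)).erase 1, (1 - ω) = (N : ℂ) := by
  have := congrArg (Polynomial.eval (1:ℂ)) (prodErase1 N hN)
  rw [Polynomial.eval_prod] at this
  simpa using this

lemma evalSum (N : ℕ) (hN : 0 < N) {ω₀ : ℂ} (hω₀ : ω₀ ∈ nthRootsFinset N (1 : ℂ)) :
    ∑ ω ∈ nthRootsFinset N (1 : ℂ), ∏ ω' ∈ (nthRootsFinset N (1 : ℂ)).erase ω, (1 - ω' * ω₀⁻¹) = (N : ℂ) := by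
  have h0 : ω₀ ≠ 0 := ne_zero_of_mem_nthRootsFinset one_ne_zero hω₀
  rw [Finset.sum_eq_single ω₀]
  · -- main term
    rw [← prodOneSub N hN]
    apply Finset.prod_bij (fun ω' _ => ω' * ω₀⁻¹)
    · intro a ha
      rw [Finset.mem_erase] at ha ⊢
      constructor
      · intro h
        apply ha.1
        field_simp at h
        exact h
      · rw [mem_nthRootsFinset hN, mul_pow, inv_pow,
          (mem_nthRootsFinset hN _).1 ha.2, (mem_nthRootsFinset hN _).1 hω₀]
        simp
    · intro a _ b _ h
      exact mul_right_cancel₀ (inv_ne_zero h0) h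
    · intro b hb
      rw [Finset.mem_erase] at hb
      refine ⟨b * ω₀, ?_, ?_⟩
      · rw [Finset.mem_erase]
        constructor
        · intro h
          apply hb.1
          have := mul_right_cancel₀ h0 (h.trans (one_mul ω₀).symm)
          exact this
        · have := mul_mem_nthRootsFinset hb.2 hω₀; rwa [mul_one] at this
      · field_simp
    · intros; rfl
  · intro ω hω hne
    apply Finset.prod_eq_zero (Finset.mem_erase.2 ⟨fun h => hne h.symm, hω₀⟩)
    · field_simp
      simp
  · intro h
    exact absurd hω₀ h

lemma polyB (N : ℕ) (hN : 0 < N) :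
    ∏ ω ∈ nthRootsFinset N (1 : ℂ), (1 - Polynomial.C ω * Polynomial.X) =
      1 - Polynomial.X ^ N := by
  have hsign : ∏ ω ∈ nthRootsFinset N (1 : ℂ), (-ω) = (-1 : ℂ) := by
    have := congrArg (Polynomial.eval (0:ℂ)) (prodXsub N hN)
    rw [Polynomial.eval_prod] at this
    simp only [Polynomial.eval_sub, Polynomial.eval_X, Polynomial.eval_C, zero_sub,
      Polynomial.eval_sub, Polynomial.eval_pow] at this
    simpa [zero_pow hN.ne'] using this
  have hinv : ∏ ω ∈ nthRootsFinset N (1 : ℂ), (Polynomial.X - Polynomial.C ω⁻¹) =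
      Polynomial.X ^ N - 1 := by
    rw [← prodXsub N hN]
    apply Finset.prod_bij (fun ω _ => ω⁻¹)
    · intro a ha
      rw [mem_nthRootsFinset hN] at ha ⊢
      rw [inv_pow, ha, inv_one]
    · intro a ha b hb h
      exact inv_injective h
    · intro b hb
      refine ⟨b⁻¹, ?_, inv_inv b⟩
      rw [mem_nthRootsFinset hN] at hb ⊢
      rw [inv_pow, hb, inv_one]
    · intros; rfl
  calc ∏ ω ∈ nthRootsFinset N (1 : ℂ), (1 - Polynomial.C ω * Polynomial.X)
      = ∏ ω ∈ nthRootsFinset N (1 : ℂ), (Polynomial.C (-ω) * (Polynomial.X - Polynomial.C ω⁻¹)) := by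
        apply Finset.prod_congr rfl
        intro ω hω
        have h0 : ω ≠ 0 := ne_zero_of_mem_nthRootsFinset one_ne_zero hω
        rw [map_neg, neg_mul, mul_sub, ← Polynomial.C_mul, mul_inv_cancel₀ h0, Polynomial.C_1]
        ring
    _ = Polynomial.C (∏ ω ∈ nthRootsFinset N (1 : ℂ), (-ω)) *
          ∏ ω ∈ nthRootsFinset N (1 : ℂ), (Polynomial.X - Polynomial.C ω⁻¹) := by
        rw [Finset.prod_mul_distrib, ← map_prod]
    _ = 1 - Polynomial.X ^ N := by rw [hsign, hinv, map_neg, Polynomial.C_1]; ring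

lemma polyA (N : ℕ) (hN : 0 < N) :
    ∑ ω ∈ nthRootsFinset N (1 : ℂ), ∏ ω' ∈ (nthRootsFinset N (1 : ℂ)).erase ω,
        (1 - Polynomial.C ω' * Polynomial.X) = Polynomial.C (N : ℂ) := by
  set S := nthRootsFinset N (1 : ℂ) with hS
  set Q : ℂ[X] := (∑ ω ∈ S, ∏ ω' ∈ S.erase ω, (1 - Polynomial.C ω' * Polynomial.X)) -
      Polynomial.C (N : ℂ) with hQ
  have hdeg : Q.natDegree < N := by
    have h1 : ∀ ω ∈ S, (∏ ω' ∈ S.erase ω, (1 - Polynomial.C ω' * Polynomial.X)).natDegree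
        ≤ N - 1 := by
      intro ω hω
      refine (Polynomial.natDegree_prod_le _ _).trans ?_
      calc ∑ ω' ∈ S.erase ω, (1 - Polynomial.C ω' * Polynomial.X).natDegree
          ≤ ∑ _ω' ∈ S.erase ω, 1 := by
            apply Finset.sum_le_sum
            intro i _
            refine (Polynomial.natDegree_sub_le _ _).trans ?_
            simp [Polynomial.natDegree_C_mul_le]
            exact (Polynomial.natDegree_C_mul_le _ _).trans (by simp)
        _ = #(S.erase ω) := by simp
        _ ≤ N - 1 := by rw [Finset.card_erase_of_mem hω, cardS N hN]
    have h2 : (∑ ω ∈ S, ∏ ω' ∈ S.erase ω,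
        (1 - Polynomial.C ω' * Polynomial.X)).natDegree ≤ N - 1 :=
      Polynomial.natDegree_sum_le_of_forall_le _ _ h1
    have := (Polynomial.natDegree_sub_le _ _).trans
      (max_le h2 (by simp : (Polynomial.C (N:ℂ)).natDegree ≤ N - 1))
    rw [← hQ] at this
    omega
  have hQ0 : Q = 0 := by
    apply Polynomial.eq_zero_of_natDegree_lt_card_of_eval_eq_zero' Q (S.image (·⁻¹))
    · intro x hx
      rw [Finset.mem_image] at hx
      obtain ⟨ω₀, hω₀, rfl⟩ := hx
      rw [hQ]
      simp only [Polynomial.eval_sub, Polynomial.eval_finset_sum, Polynomial.eval_prod,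
        Polynomial.eval_sub, Polynomial.eval_one, Polynomial.eval_mul, Polynomial.eval_C,
        Polynomial.eval_X]
      rw [sub_eq_zero]
      exact evalSum N hN hω₀
    · rw [Finset.card_image_of_injective _ inv_injective, cardS N hN]
      exact hdeg
  have := sub_eq_zero.mp hQ0
  exact this

noncomputable abbrev Eexp : ℂ⟦X⟧ := PowerSeries.exp ℂ
noncomputable abbrev u (ω : ℂ) : ℂ⟦X⟧ := 1 - PowerSeries.C (R := ℂ) ω * Eexp

lemma aeval_fact (ω : ℂ) :
    Polynomial.aeval Eexp (1 - Polynomial.C ω * Polynomial.X) = u ω := by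
  simp [PowerSeries.algebraMap_apply, Algebra.algebraMap_self]

lemma psB (N : ℕ) (hN : 0 < N) :
    ∏ ω ∈ nthRootsFinset N (1 : ℂ), u ω = 1 - Eexp ^ N := by
  have := congrArg (Polynomial.aeval Eexp) (polyB N hN)
  rw [map_prod] at this
  simp only [aeval_fact] at this
  simpa using this

lemma psA (N : ℕ) (hN : 0 < N) :
    ∑ ω ∈ nthRootsFinset N (1 : ℂ), ∏ ω' ∈ (nthRootsFinset N (1 : ℂ)).erase ω, u ω' =
      ((N : ℂ⟦X⟧)) := by
  have := congrArg (Polynomial.aeval Eexp) (polyA N hN)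
  rw [map_sum] at this
  simp only [map_prod, aeval_fact] at this
  rw [this]
  simp [PowerSeries.algebraMap_apply]


lemma constCoeff_u (ω : ℂ) : constantCoeff (R := ℂ) (u ω) = 1 - ω := by
  simp [constantCoeff_exp]

lemma oneSubEne : (1 - Eexp : ℂ⟦X⟧) ≠ 0 := by
  intro h
  have := congrArg (PowerSeries.coeff (R := ℂ) 1) h
  simp [coeff_exp] at this

lemma geomPS (N : ℕ) : (1 - Eexp) * ∑ k ∈ range N, Eexp ^ k = 1 - Eexp ^ N := by
  have := geom_sum_mul (Eexp) N
  linear_combination -this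

lemma prodErasePS (N : ℕ) (hN : 0 < N) :
    ∏ ω ∈ (nthRootsFinset N (1 : ℂ)).erase 1, u ω = ∑ k ∈ range N, Eexp ^ k := by
  apply mul_left_cancel₀ oneSubEne
  rw [geomPS]
  have h1 : (1 : ℂ) ∈ nthRootsFinset N (1 : ℂ) := one_mem_nthRootsFinset hN
  have : u 1 = 1 - Eexp := by simp
  rw [← this, Finset.mul_prod_erase (nthRootsFinset N (1 : ℂ)) u h1, psB N hN]

lemma f_mul (N : ℕ) (hN : 0 < N) :
    (∑ ω ∈ nthRootsFinset N (1 : ℂ), (u ω)⁻¹) * (1 - Eexp ^ N) =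
      (N : ℂ⟦X⟧) - ∑ k ∈ range N, Eexp ^ k := by
  rw [← psB N hN, Finset.sum_mul]
  have h1 : (1 : ℂ) ∈ nthRootsFinset N (1 : ℂ) := one_mem_nthRootsFinset hN
  have step : ∀ ω ∈ nthRootsFinset N (1 : ℂ),
      (u ω)⁻¹ * ∏ ω' ∈ nthRootsFinset N (1 : ℂ), u ω' =
      if ω = 1 then 0 else ∏ ω' ∈ (nthRootsFinset N (1 : ℂ)).erase ω, u ω' := by
    intro ω hω
    by_cases h : ω = 1
    · subst h
      have : (u 1)⁻¹ = 0 := by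
        rw [PowerSeries.inv_eq_zero, constCoeff_u]; ring
      simp [this]
    · have hconst : constantCoeff (R := ℂ) (u ω) ≠ 0 := by
        rw [constCoeff_u]
        intro hh
        exact h (by linear_combination -hh)
      rw [if_neg h, ← Finset.mul_prod_erase (nthRootsFinset N (1 : ℂ)) u hω, ← mul_assoc,
        PowerSeries.inv_mul_cancel _ hconst, one_mul]
  rw [Finset.sum_congr rfl step]
  rw [← Finset.sum_erase (nthRootsFinset N (1 : ℂ)) (by simp :
    (if (1:ℂ) = 1 then (0:ℂ⟦X⟧) else ∏ ω' ∈ (nthRootsFinset N (1 : ℂ)).erase (1:ℂ), u ω') = 0)]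
  rw [Finset.sum_congr rfl (fun x hx => if_neg (Finset.mem_erase.1 hx).1)]
  rw [Finset.sum_erase_eq_sub h1, psA N hN, prodErasePS N hN]


noncomputable def gps (N : ℕ) : ℂ⟦X⟧ :=
  PowerSeries.mk fun n =>
    (1 - (N : ℂ) ^ (n + 1)) * ((bernoulli (n + 1) : ℚ) : ℂ) / (n + 1).factorial

lemma X_mul_gps (N : ℕ) :
    (PowerSeries.X : ℂ⟦X⟧) * gps N =
      bernoulliPowerSeries ℂ - rescale (N : ℂ) (bernoulliPowerSeries ℂ) := by
  ext n
  cases n with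
  | zero =>
    have hr : (PowerSeries.coeff (R := ℂ) 0) ((rescale (N:ℂ)) (bernoulliPowerSeries ℂ)) =
        (PowerSeries.coeff (R := ℂ) 0) (bernoulliPowerSeries ℂ) := by
      rw [coeff_rescale]; simp
    rw [map_sub, hr, PowerSeries.coeff_zero_X_mul]
    ring
  | succ m =>
    rw [coeff_succ_X_mul]
    simp only [gps, coeff_mk, map_sub, coeff_rescale, bernoulliPowerSeries, coeff_mk]
    have hf : ((m+1).factorial : ℂ) ≠ 0 := Nat.cast_ne_zero.2 (Nat.factorial_ne_zero _)
    simp only [eq_ratCast]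
    rw [div_eq_iff hf]
    push_cast
    field_simp

lemma rescale_X' (a : ℂ) : rescale a (PowerSeries.X : ℂ⟦X⟧) = PowerSeries.C (R := ℂ) a * PowerSeries.X := by
  ext n
  rw [coeff_rescale]
  simp only [PowerSeries.coeff_X, PowerSeries.coeff_C_mul]
  rcases eq_or_ne n 1 with h | h <;> simp [h]

lemma EexpN_sub_one (N : ℕ) : Eexp ^ N - 1 = rescale (N : ℂ) (Eexp - 1) := by
  rw [map_sub, ← exp_pow_eq_rescale_exp, map_one]

lemma EexpN_sub_one_ne (N : ℕ) (hN : 0 < N) : (Eexp ^ N - 1 : ℂ⟦X⟧) ≠ 0 := by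
  intro h
  have := congrArg (PowerSeries.coeff (R := ℂ) 1) h
  rw [EexpN_sub_one] at this
  simp [coeff_rescale, coeff_exp] at this
  omega

lemma g_mul (N : ℕ) (hN : 0 < N) :
    gps N * (Eexp ^ N - 1) = (∑ k ∈ range N, Eexp ^ k) - (N : ℂ⟦X⟧) := by
  apply mul_left_cancel₀ (PowerSeries.X_ne_zero : (PowerSeries.X : ℂ⟦X⟧) ≠ 0)
  rw [← mul_assoc, X_mul_gps, sub_mul]
  have h1 : bernoulliPowerSeries ℂ * (Eexp ^ N - 1) =
      PowerSeries.X * ∑ k ∈ range N, Eexp ^ k := by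
    have hg : Eexp ^ N - 1 = (Eexp - 1) * ∑ k ∈ range N, Eexp ^ k := by
      rw [← geom_sum_mul]; ring
    rw [hg, ← mul_assoc, bernoulliPowerSeries_mul_exp_sub_one]
  have h2 : rescale (N : ℂ) (bernoulliPowerSeries ℂ) * (Eexp ^ N - 1) =
      PowerSeries.C (R := ℂ) (N : ℂ) * PowerSeries.X := by
    rw [EexpN_sub_one, ← map_mul, bernoulliPowerSeries_mul_exp_sub_one, rescale_X']
  rw [h1, h2]
  rw [mul_sub]
  congr 1
  rw [← map_natCast (PowerSeries.C (R := ℂ)) N]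
  ring

lemma f_eq_g (N : ℕ) (hN : 0 < N) :
    ∑ ω ∈ nthRootsFinset N (1 : ℂ), (u ω)⁻¹ = gps N := by
  apply mul_right_cancel₀ (EexpN_sub_one_ne N hN)
  rw [g_mul N hN]
  have := f_mul N hN
  linear_combination -this

lemma f_eq_g' (N : ℕ) (hN : 0 < N) :
    ∑ ω ∈ nthRootsFinset N (1 : ℂ), (1 - PowerSeries.C (R := ℂ) ω * PowerSeries.exp ℂ)⁻¹ = gps N :=
  f_eq_g N hN

lemma pow_eq_pow_of_modEq' {ω : ℂ} {M : ℕ} (hω : ω ^ M = 1) {a b : ℕ}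
    (h : a ≡ b [MOD M]) : ω ^ a = ω ^ b := by
  have key : ∀ e : ℕ, ω ^ e = ω ^ (e % M) := by
    intro e
    conv_lhs => rw [← Nat.div_add_mod e M]
    rw [pow_add, pow_mul, hω, one_pow, one_mul]
  rw [key a, key b]
  exact congrArg (ω ^ ·) h

lemma sum_roots_mul (p c : ℕ) (hp : 0 < p) (hc : 0 < c) (h : Nat.Coprime p c)
    (F : ℂ → ℂ) :
    ∑ ρ ∈ nthRootsFinset p (1 : ℂ), ∑ ξ ∈ nthRootsFinset c (1 : ℂ), F (ρ * ξ) =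
      ∑ ω ∈ nthRootsFinset (p * c) (1 : ℂ), F ω := by
  have hpc : 0 < p * c := Nat.mul_pos hp hc
  -- inverses
  set c' := c ^ (p.totient - 1) with hc'
  set p' := p ^ (c.totient - 1) with hp'
  have htp : 0 < p.totient := Nat.totient_pos.mpr hp
  have htc : 0 < c.totient := Nat.totient_pos.mpr hc
  have hcc : c * c' ≡ 1 [MOD p] := by
    have : c * c' = c ^ p.totient := by
      rw [hc', ← pow_succ']
      congr 1
      omega
    rw [this]
    exact Nat.ModEq.pow_totient h.symm
  have hpp : p * p' ≡ 1 [MOD c] := by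
    have : p * p' = p ^ c.totient := by
      rw [hp', ← pow_succ']
      congr 1
      omega
    rw [this]
    exact Nat.ModEq.pow_totient h
  have hkey : c * c' + p * p' ≡ 1 [MOD p * c] := by
    rw [← Nat.modEq_and_modEq_iff_modEq_mul h]
    constructor
    · calc c * c' + p * p' ≡ 1 + 0 [MOD p] := by
            exact hcc.add ((Nat.modEq_zero_iff_dvd).2 ⟨p', rfl⟩)
        _ = 1 := by ring
    · calc c * c' + p * p' ≡ 0 + 1 [MOD c] := by
            refine Nat.ModEq.add ?_ hpp
            exact (Nat.modEq_zero_iff_dvd).2 ⟨c', by ring⟩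
        _ = 1 := by ring
  rw [← Finset.sum_product']
  refine Finset.sum_nbij' (fun x => x.1 * x.2) (fun ω => (ω ^ (c * c'), ω ^ (p * p')))
    ?_ ?_ ?_ ?_ ?_
  · rintro ⟨ρ, ξ⟩ hm
    rw [Finset.mem_product] at hm
    rw [mem_nthRootsFinset hpc]
    have h1 := (mem_nthRootsFinset hp _).1 hm.1
    have h2 := (mem_nthRootsFinset hc _).1 hm.2
    rw [mul_pow]
    calc ρ ^ (p*c) * ξ ^ (p*c) = (ρ^p)^c * (ξ^c)^p := by rw [← pow_mul, ← pow_mul, mul_comm p c]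
      _ = 1 := by rw [h1, h2]; ring
  · intro ω hω
    rw [mem_nthRootsFinset hpc] at hω
    rw [Finset.mem_product]
    constructor
    · rw [mem_nthRootsFinset hp, ← pow_mul]
      calc ω ^ (c * c' * p) = (ω ^ (p*c)) ^ c' := by rw [← pow_mul]; ring_nf
      _ = 1 := by rw [hω, one_pow]
    · rw [mem_nthRootsFinset hc, ← pow_mul]
      calc ω ^ (p * p' * c) = (ω ^ (p*c)) ^ p' := by rw [← pow_mul]; ring_nf
      _ = 1 := by rw [hω, one_pow]
  · rintro ⟨ρ, ξ⟩ hm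
    rw [Finset.mem_product] at hm
    have h1 := (mem_nthRootsFinset hp _).1 hm.1
    have h2 := (mem_nthRootsFinset hc _).1 hm.2
    have e1 : (ρ * ξ) ^ (c * c') = ρ := by
      rw [mul_pow]
      have : ξ ^ (c * c') = 1 := by rw [pow_mul, h2, one_pow]
      rw [this, mul_one, pow_eq_pow_of_modEq' h1 hcc, pow_one]
    have e2 : (ρ * ξ) ^ (p * p') = ξ := by
      rw [mul_pow]
      have : ρ ^ (p * p') = 1 := by rw [pow_mul, h1, one_pow]
      rw [this, one_mul, pow_eq_pow_of_modEq' h2 hpp, pow_one]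
    simp [e1, e2]
  · intro ω hω
    rw [mem_nthRootsFinset hpc] at hω
    simp only
    rw [← pow_add, pow_eq_pow_of_modEq' hω hkey, pow_one]
  · intros; rfl

end Aux

section Main
open Finset PowerSeries

/-- For a prime `p`, an integer `c > 1` with `p ∤ c`, and `n ≥ 0`:
`Σ_{ρ^p=1} Σ_{ξ^c=1, ξ≠1} 𝔅_n(ρξ) = p^{n+1} (1-c^{n+1}) B_{n+1}/(n+1)`. -/


lemma sum_twisted (N : ℕ) (hN : 0 < N) (n : ℕ) :
    ∑ ω ∈ nthRootsFinset N (1 : ℂ), twistedBernoulli ω n =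
      (1 - (N : ℂ) ^ (n + 1)) * ((bernoulli (n + 1) : ℚ) : ℂ) / (n + 1) := by
  simp only [twistedBernoulli]
  rw [← Finset.mul_sum, ← map_sum, f_eq_g' N hN]
  rw [gps, coeff_mk]
  have hf : ((n.factorial : ℂ)) ≠ 0 := Nat.cast_ne_zero.2 (Nat.factorial_ne_zero _)
  have hn1 : ((n : ℂ) + 1) ≠ 0 := Nat.cast_add_one_ne_zero n
  have hfs : (((n+1).factorial : ℂ)) = ((n:ℂ)+1) * (n.factorial : ℂ) := by
    rw [Nat.factorial_succ]; push_cast; ring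
  rw [hfs]
  field_simp

theorem statement17 (p : ℕ) (hp : p.Prime) (c : ℕ) (hc : 1 < c) (hpc : ¬ p ∣ c) (n : ℕ) :
    ∑ ρ ∈ nthRootsFinset p (1 : ℂ), ∑ ξ ∈ (nthRootsFinset c (1 : ℂ)).erase 1,
        twistedBernoulli (ρ * ξ) n =
      (p : ℂ) ^ (n + 1) * (1 - (c : ℂ) ^ (n + 1)) * ((bernoulli (n + 1) : ℚ) : ℂ) /
        (n + 1) := by
  have hp0 : 0 < p := hp.pos
  have hc0 : 0 < c := by omega
  have hcop : Nat.Coprime p c := (Nat.Prime.coprime_iff_not_dvd hp).2 hpc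
  have h1c : (1 : ℂ) ∈ nthRootsFinset c (1 : ℂ) := one_mem_nthRootsFinset hc0
  have step1 : ∀ ρ : ℂ, ∑ ξ ∈ (nthRootsFinset c (1 : ℂ)).erase 1, twistedBernoulli (ρ * ξ) n =
      (∑ ξ ∈ nthRootsFinset c (1 : ℂ), twistedBernoulli (ρ * ξ) n) - twistedBernoulli ρ n := by
    intro ρ
    rw [Finset.sum_erase_eq_sub h1c, mul_one]
  rw [Finset.sum_congr rfl fun ρ _ => step1 ρ, Finset.sum_sub_distrib,
    sum_roots_mul p c hp0 hc0 hcop (fun ω => twistedBernoulli ω n), sum_twisted (p*c) (Nat.mul_pos hp0 hc0) n,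
    sum_twisted p hp0 n]
  have hn1 : ((n : ℂ) + 1) ≠ 0 := Nat.cast_add_one_ne_zero n
  push_cast
  field_simp
  ring

end Main
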